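/- For every $\gamma > 0$, there exists $\delta > 0$ such that for all sufficiently large $n$ and all $m \le \delta n^{4/3}$, the number of graphs on vertex set $\{1,\dots,n\}$ with exactly $m$ edges containing no copy of $C_4$ (induced or not) is at least $e^{-\gamma m} \binom{\binom{n}{2}}{m}$. -/

import Mathlib

open Finset

attribute [local instance] Classical.propDecidable
set_option maxHeartbeats 1600000

/-- A graph contains a (not necessarily induced) copy of `C₄` if it has four distinct
vertices forming a 4-cycle. -/
def SimpleGraph.HasC4 {V : Type*} (G : SimpleGraph V) : Prop :=
  ∃ v₁ v₂ v₃ v₄ : V,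
    v₁ ≠ v₂ ∧ v₁ ≠ v₃ ∧ v₁ ≠ v₄ ∧ v₂ ≠ v₃ ∧ v₂ ≠ v₄ ∧ v₃ ≠ v₄ ∧
    G.Adj v₁ v₂ ∧ G.Adj v₂ v₃ ∧ G.Adj v₃ v₄ ∧ G.Adj v₄ v₁

namespace C4Lower

noncomputable section

variable {n : ℕ}

def degIn (s : Finset (Sym2 (Fin n))) (v : Fin n) : ℕ := (s.filter (fun e => v ∈ e)).card

def Good (D : ℕ) (s : Finset (Sym2 (Fin n))) : Prop :=
  (∀ e ∈ s, ¬ e.IsDiag) ∧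
    ¬ (SimpleGraph.fromEdgeSet (↑s : Set (Sym2 (Fin n)))).HasC4 ∧ ∀ v, degIn s v ≤ D

def allE (n : ℕ) : Finset (Sym2 (Fin n)) := univ.filter (fun e => ¬ e.IsDiag)

def GS (n D k : ℕ) : Finset (Finset (Sym2 (Fin n))) :=
  univ.filter (fun s => s.card = k ∧ Good D s)

def Ext (D : ℕ) (s : Finset (Sym2 (Fin n))) : Finset (Sym2 (Fin n)) :=
  (allE n).filter (fun e => e ∉ s ∧ Good D (insert e s))

def nbr (s : Finset (Sym2 (Fin n))) (x : Fin n) : Finset (Fin n) :=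
  (univ : Finset (Fin n)).filter (fun w => s(x, w) ∈ s)

def badC4 (s : Finset (Sym2 (Fin n))) : Finset (Sym2 (Fin n)) :=
  ((univ : Finset ((Fin n × Fin n) × Fin n × Fin n)).filter
      (fun q => s(q.1.1, q.1.2) ∈ s ∧ s(q.1.1, q.2.1) ∈ s ∧ s(q.1.2, q.2.2) ∈ s)).image
    (fun q => s(q.2.1, q.2.2))

def Heavy (D : ℕ) (s : Finset (Sym2 (Fin n))) : Finset (Fin n) :=
  (univ : Finset (Fin n)).filter (fun x => D ≤ degIn s x)

def badDeg (D : ℕ) (s : Finset (Sym2 (Fin n))) : Finset (Sym2 (Fin n)) :=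
  ((Heavy D s) ×ˢ (univ : Finset (Fin n))).image (fun p => s(p.1, p.2))

lemma card_allE (n : ℕ) : (allE n).card = n.choose 2 := by
  have h := SimpleGraph.card_edgeFinset_top_eq_card_choose_two (V := Fin n)
  rw [Fintype.card_fin] at h
  rw [← h]
  congr 1
  ext e
  simp [allE, SimpleGraph.mem_edgeFinset, SimpleGraph.edgeSet_top]

lemma card_nbr_le (s : Finset (Sym2 (Fin n))) (x : Fin n) : (nbr s x).card ≤ degIn s x := by
  apply Finset.card_le_card_of_injOn (fun w => s(x, w))
  · intro w hw
    simp only [nbr, Finset.mem_coe, mem_filter, mem_univ, true_and] at hw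
    simp [degIn, Finset.mem_filter, hw]
  · intro w _ w' _ h
    exact Sym2.congr_right.1 h

lemma sum_degIn (s : Finset (Sym2 (Fin n))) (hs : ∀ e ∈ s, ¬ e.IsDiag) :
    ∑ v, degIn s v = 2 * s.card := by
  have h1 : ∀ v : Fin n, degIn s v = ∑ e ∈ s, if v ∈ e then 1 else 0 := by
    intro v; rw [degIn, Finset.card_filter]
  simp_rw [h1]
  rw [Finset.sum_comm]
  have h2 : ∀ e ∈ s, (∑ v : Fin n, if v ∈ e then 1 else 0) = 2 := by
    intro e he
    induction e with
    | _ a b =>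
      have hab : a ≠ b := by simpa [Sym2.mk_isDiag_iff] using hs _ he
      rw [← Finset.card_filter]
      have : (univ.filter (fun v : Fin n => v ∈ (s(a,b) : Sym2 (Fin n)))) = {a, b} := by
        ext v; simp [Sym2.mem_iff]
      rw [this, Finset.card_insert_of_notMem (by simp [hab]), Finset.card_singleton]
  rw [Finset.sum_congr rfl h2, Finset.sum_const, smul_eq_mul, mul_comm]

lemma card_heavy_mul (D : ℕ) (s : Finset (Sym2 (Fin n))) (hs : ∀ e ∈ s, ¬ e.IsDiag) :
    (Heavy D s).card * D ≤ 2 * s.card := by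
  calc (Heavy D s).card * D = (Heavy D s).card • D := (smul_eq_mul _ _).symm
    _ ≤ ∑ v ∈ Heavy D s, degIn s v :=
        Finset.card_nsmul_le_sum _ _ _ (fun v hv => (Finset.mem_filter.1 hv).2)
    _ ≤ ∑ v, degIn s v := Finset.sum_le_sum_of_subset (Finset.subset_univ _)
    _ = 2 * s.card := sum_degIn s hs

lemma card_badDeg_le (D : ℕ) (s : Finset (Sym2 (Fin n))) :
    (badDeg D s).card ≤ (Heavy D s).card * n := by
  refine le_trans Finset.card_image_le ?_
  rw [Finset.card_product]
  simp

lemma card_badC4_le (D : ℕ) (s : Finset (Sym2 (Fin n))) (hdeg : ∀ v, degIn s v ≤ D) :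
    (badC4 s).card ≤ 2 * s.card * D ^ 2 := by
  refine le_trans (Finset.card_image_le) ?_
  have hfib := Finset.card_eq_sum_card_fiberwise
    (s := (univ : Finset ((Fin n × Fin n) × Fin n × Fin n)).filter
      (fun q => s(q.1.1, q.1.2) ∈ s ∧ s(q.1.1, q.2.1) ∈ s ∧ s(q.1.2, q.2.2) ∈ s))
    (t := (univ : Finset (Fin n × Fin n)).filter (fun p => s(p.1, p.2) ∈ s))
    (f := fun q => q.1)
    (fun q hq => Finset.mem_filter.2 ⟨Finset.mem_univ _, ((Finset.mem_filter.1 hq).2).1⟩)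
  rw [hfib]
  have hTord : ((univ : Finset (Fin n × Fin n)).filter (fun p => s(p.1, p.2) ∈ s)).card
      ≤ 2 * s.card := by
    have hfib2 := Finset.card_eq_sum_card_fiberwise
      (s := (univ : Finset (Fin n × Fin n)).filter (fun p => s(p.1, p.2) ∈ s)) (t := s)
      (f := fun p => s(p.1, p.2)) (fun p hp => (mem_filter.1 hp).2)
    rw [hfib2]
    calc ∑ e ∈ s, _ ≤ ∑ _e ∈ s, 2 := Finset.sum_le_sum (fun e he => ?_)
      _ = 2 * s.card := by rw [Finset.sum_const, smul_eq_mul, mul_comm]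
    · induction e with
      | _ a b =>
        refine le_trans (Finset.card_le_card (t := ({(a,b),(b,a)} : Finset (Fin n × Fin n))) ?_)
          (le_trans (Finset.card_insert_le _ _) (by simp))
        intro p hp
        simp only [mem_filter, mem_univ, true_and] at hp
        have h := hp.2
        rw [Sym2.eq_iff] at h
        simp only [Finset.mem_insert, Finset.mem_singleton, Prod.ext_iff]
        tauto
  calc ∑ p ∈ _, _ ≤ ∑ p ∈ (univ : Finset (Fin n × Fin n)).filter (fun p => s(p.1, p.2) ∈ s),
        D ^ 2 := Finset.sum_le_sum (fun p hp => ?_)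
    _ ≤ 2 * s.card * D ^ 2 := by
        rw [Finset.sum_const, smul_eq_mul]
        exact Nat.mul_le_mul_right _ hTord
  · refine le_trans (Finset.card_le_card_of_injOn (fun q => q.2)
      (t := (nbr s p.1) ×ˢ (nbr s p.2)) ?_ ?_) ?_
    · intro q hq
      simp only [Finset.mem_coe, Finset.mem_filter, Finset.mem_univ, true_and] at hq
      obtain ⟨⟨h1, h2, h3⟩, rfl⟩ := hq
      exact Finset.mem_product.2 ⟨Finset.mem_filter.2 ⟨Finset.mem_univ _, h2⟩,
        Finset.mem_filter.2 ⟨Finset.mem_univ _, h3⟩⟩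
    · intro q hq q' hq' hqq
      simp only [Finset.mem_coe, Finset.mem_filter] at hq hq'
      exact Prod.ext (hq.2.trans hq'.2.symm) hqq
    · rw [Finset.card_product]
      calc (nbr s p.1).card * (nbr s p.2).card ≤ D * D :=
            Nat.mul_le_mul (le_trans (card_nbr_le s p.1) (hdeg p.1))
              (le_trans (card_nbr_le s p.2) (hdeg p.2))
        _ = D ^ 2 := (sq D).symm

lemma path_of_newC4 (s : Finset (Sym2 (Fin n))) (u v : Fin n)
    (h0 : ¬ (SimpleGraph.fromEdgeSet (↑s : Set (Sym2 (Fin n)))).HasC4)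
    (h1 : (SimpleGraph.fromEdgeSet (↑(insert (s(u, v) : Sym2 (Fin n)) s) :
      Set (Sym2 (Fin n)))).HasC4) :
    ∃ x y : Fin n, s(u, x) ∈ s ∧ s(x, y) ∈ s ∧ s(y, v) ∈ s := by
  obtain ⟨a, b, c, d, hab, hac, had, hbc, hbd, hcd, h12, h23, h34, h41⟩ := h1
  rw [SimpleGraph.fromEdgeSet_adj] at h12 h23 h34 h41
  simp only [Finset.coe_insert, Set.mem_insert_iff, Finset.mem_coe] at h12 h23 h34 h41
  obtain ⟨h12 | h12, -⟩ := h12 <;> obtain ⟨h23 | h23, -⟩ := h23 <;>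
    obtain ⟨h34 | h34, -⟩ := h34 <;> obtain ⟨h41 | h41, -⟩ := h41
  all_goals try {
    exfalso
    first
      | (have h := h12.trans h23.symm; rw [Sym2.eq_iff] at h; tauto)
      | (have h := h12.trans h34.symm; rw [Sym2.eq_iff] at h; tauto)
      | (have h := h12.trans h41.symm; rw [Sym2.eq_iff] at h; tauto)
      | (have h := h23.trans h34.symm; rw [Sym2.eq_iff] at h; tauto)
      | (have h := h23.trans h41.symm; rw [Sym2.eq_iff] at h; tauto)
      | (have h := h34.trans h41.symm; rw [Sym2.eq_iff] at h; tauto) }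
  -- (e,s,s,s)
  · rw [Sym2.eq_iff] at h12
    obtain ⟨rfl, rfl⟩ | ⟨rfl, rfl⟩ := h12
    · exact ⟨d, c, by rwa [Sym2.eq_swap], by rwa [Sym2.eq_swap], by rwa [Sym2.eq_swap]⟩
    · exact ⟨c, d, h23, h34, h41⟩
  -- (s,e,s,s)
  · rw [Sym2.eq_iff] at h23
    obtain ⟨rfl, rfl⟩ | ⟨rfl, rfl⟩ := h23
    · exact ⟨a, d, by rwa [Sym2.eq_swap], by rwa [Sym2.eq_swap], by rwa [Sym2.eq_swap]⟩
    · exact ⟨d, a, h34, h41, h12⟩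
  -- (s,s,e,s)
  · rw [Sym2.eq_iff] at h34
    obtain ⟨rfl, rfl⟩ | ⟨rfl, rfl⟩ := h34
    · exact ⟨b, a, by rwa [Sym2.eq_swap], by rwa [Sym2.eq_swap], by rwa [Sym2.eq_swap]⟩
    · exact ⟨a, b, h41, h12, h23⟩
  -- (s,s,s,e)
  · rw [Sym2.eq_iff] at h41
    obtain ⟨rfl, rfl⟩ | ⟨rfl, rfl⟩ := h41
    · exact ⟨c, b, by rwa [Sym2.eq_swap], by rwa [Sym2.eq_swap], by rwa [Sym2.eq_swap]⟩
    · exact ⟨b, c, h12, h23, h34⟩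
  -- (s,s,s,s)
  · exact absurd ⟨a, b, c, d, hab, hac, had, hbc, hbd, hcd,
      (SimpleGraph.fromEdgeSet_adj _).2 ⟨h12, hab⟩, (SimpleGraph.fromEdgeSet_adj _).2 ⟨h23, hbc⟩,
      (SimpleGraph.fromEdgeSet_adj _).2 ⟨h34, hcd⟩,
      (SimpleGraph.fromEdgeSet_adj _).2 ⟨h41, had.symm⟩⟩ h0

lemma good_insert (D : ℕ) (s : Finset (Sym2 (Fin n))) (hG : Good D s)
    (e : Sym2 (Fin n)) (he : ¬ e.IsDiag) (hes : e ∉ s)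
    (hb1 : e ∉ badC4 s) (hb2 : e ∉ badDeg D s) : Good D (insert e s) := by
  obtain ⟨hdiag, hC4, hdeg⟩ := hG
  revert he hes hb1 hb2
  induction e using Sym2.ind with
  | _ u v =>
    intro he hes hb1 hb2
    have huv : u ≠ v := by simpa [Sym2.mk_isDiag_iff] using he
    refine ⟨?_, ?_, ?_⟩
    · intro f hf
      rcases Finset.mem_insert.1 hf with rfl | hf
      · exact he
      · exact hdiag f hf
    · intro hbad
      obtain ⟨x, y, hux, hxy, hyv⟩ := path_of_newC4 s u v hC4 hbad
      refine hb1 ?_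
      refine Finset.mem_image.2 ⟨((x, y), (u, v)), Finset.mem_filter.2 ⟨Finset.mem_univ _, hxy, ?_, hyv⟩, rfl⟩
      rwa [Sym2.eq_swap]
    · intro w
      unfold degIn
      rw [Finset.filter_insert]
      by_cases hw : w ∈ (s(u, v) : Sym2 (Fin n))
      · rw [if_pos hw]
        have hlt : degIn s w < D := by
          by_contra hge
          push_neg at hge
          refine hb2 (Finset.mem_image.2 ?_)
          rcases Sym2.mem_iff.1 hw with rfl | rfl
          · exact ⟨(w, v), Finset.mem_product.2 ⟨Finset.mem_filter.2 ⟨Finset.mem_univ _, hge⟩,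
              Finset.mem_univ _⟩, rfl⟩
          · exact ⟨(w, u), Finset.mem_product.2 ⟨Finset.mem_filter.2 ⟨Finset.mem_univ _, hge⟩,
              Finset.mem_univ _⟩, Sym2.eq_swap⟩
        calc (insert (s(u,v)) (s.filter (fun e => w ∈ e))).card
            ≤ (s.filter (fun e => w ∈ e)).card + 1 := Finset.card_insert_le _ _
          _ ≤ D := hlt
      · rw [if_neg hw]
        exact hdeg w

lemma ext_card_ge (D k : ℕ) (hD : 0 < D) (s : Finset (Sym2 (Fin n)))
    (hs : s ∈ GS n D k) :
    ((Ext D s).card : ℝ) ≥ (n.choose 2 : ℝ) - k - 2 * k * D ^ 2 - (2 * k / D) * n := by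
  rw [GS, mem_filter] at hs
  obtain ⟨-, hk, hG⟩ := hs
  obtain ⟨hdiag, hC4, hdeg⟩ := hG
  have hsub : (allE n) \ (s ∪ badC4 s ∪ badDeg D s) ⊆ Ext D s := by
    intro e he
    rw [Finset.mem_sdiff] at he
    obtain ⟨heA, heB⟩ := he
    simp only [Finset.mem_union, not_or] at heB
    obtain ⟨⟨hes, hb1⟩, hb2⟩ := heB
    refine Finset.mem_filter.2 ⟨heA, hes, ?_⟩
    exact good_insert D s ⟨hdiag, hC4, hdeg⟩ e
      (by simpa [allE] using heA) hes hb1 hb2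
  have h1 : (allE n).card ≤ (Ext D s).card + (s.card + (badC4 s).card + (badDeg D s).card) := by
    calc (allE n).card
        ≤ ((allE n) \ (s ∪ badC4 s ∪ badDeg D s)).card + (s ∪ badC4 s ∪ badDeg D s).card :=
          Finset.card_le_card_sdiff_add_card
      _ ≤ (Ext D s).card + (s.card + (badC4 s).card + (badDeg D s).card) := by
          refine Nat.add_le_add (Finset.card_le_card hsub) ?_
          refine le_trans (Finset.card_union_le _ _) ?_
          exact Nat.add_le_add_right (Finset.card_union_le _ _) _
  have hb4 : ((badC4 s).card : ℝ) ≤ 2 * k * D ^ 2 := by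
    have := card_badC4_le D s hdeg
    rw [hk] at this
    exact_mod_cast this
  have hHn : ((Heavy D s).card : ℝ) ≤ 2 * k / D := by
    rw [le_div_iff₀ (by exact_mod_cast hD)]
    have := card_heavy_mul D s hdiag
    rw [hk] at this
    exact_mod_cast this
  have hbd : ((badDeg D s).card : ℝ) ≤ (2 * k / D) * n := by
    calc ((badDeg D s).card : ℝ) ≤ ((Heavy D s).card : ℝ) * n := by
          exact_mod_cast card_badDeg_le D s
      _ ≤ (2 * k / D) * n := by
          exact mul_le_mul_of_nonneg_right hHn (by positivity)
  have h1' : ((n.choose 2 : ℕ) : ℝ) ≤ ((Ext D s).card : ℝ) +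
      (k + ((badC4 s).card : ℝ) + ((badDeg D s).card : ℝ)) := by
    rw [← card_allE n]
    have := h1
    rw [hk] at this
    exact_mod_cast this
  linarith

lemma gs_succ_card (D k : ℕ) :
    ∑ s ∈ GS n D k, (Ext D s).card ≤ (k + 1) * (GS n D (k + 1)).card := by
  classical
  set P : Finset (Σ _ : Finset (Sym2 (Fin n)), Sym2 (Fin n)) :=
    (GS n D k).sigma (fun s => Ext D s) with hP
  have hcardP : P.card = ∑ s ∈ GS n D k, (Ext D s).card := Finset.card_sigma _ _
  set φ : (Σ _ : Finset (Sym2 (Fin n)), Sym2 (Fin n)) → Finset (Sym2 (Fin n)) :=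
    fun q => insert q.2 q.1 with hφ
  have hmem : ∀ q ∈ P, q.1 ∈ GS n D k ∧ q.2 ∈ Ext D q.1 := by
    intro q hq
    exact Finset.mem_sigma.1 hq
  have himg : P.image φ ⊆ GS n D (k + 1) := by
    intro t ht
    obtain ⟨q, hq, rfl⟩ := Finset.mem_image.1 ht
    obtain ⟨hq1, hq2⟩ := hmem q hq
    rw [GS, Finset.mem_filter] at hq1 ⊢
    rw [Ext, Finset.mem_filter] at hq2
    refine ⟨Finset.mem_univ _, ?_, hq2.2.2⟩
    rw [Finset.card_insert_of_notMem hq2.2.1, hq1.2.1]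
  have hfiber : ∀ t ∈ P.image φ, (P.filter (fun q => φ q = t)).card ≤ k + 1 := by
    intro t ht
    obtain ⟨q0, hq0, hq0t⟩ := Finset.mem_image.1 ht
    have htcard : t.card = k + 1 := by
      obtain ⟨hq1, hq2⟩ := hmem q0 hq0
      rw [GS, Finset.mem_filter] at hq1
      rw [Ext, Finset.mem_filter] at hq2
      rw [← hq0t, hφ]
      rw [Finset.card_insert_of_notMem hq2.2.1, hq1.2.1]
    rw [← htcard]
    apply Finset.card_le_card_of_injOn (fun q => q.2)
    · intro q hq
      rw [Finset.mem_coe, Finset.mem_filter] at hq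
      have h := Finset.mem_insert_self q.2 q.1
      have ht2 : insert q.2 q.1 = t := hq.2
      rw [ht2] at h
      exact h
    · intro q hq q' hq' h2
      have h2' : q.2 = q'.2 := h2
      rw [Finset.mem_coe, Finset.mem_filter] at hq hq'
      obtain ⟨hqP, hqt⟩ := hq
      obtain ⟨hq'P, hq't⟩ := hq'
      have hq2 : q.2 ∉ q.1 := by
        have := (Finset.mem_filter.1 (hmem q hqP).2).2.1
        exact this
      have hq'2 : q'.2 ∉ q'.1 := by
        have := (Finset.mem_filter.1 (hmem q' hq'P).2).2.1
        exact this
      have e1 : q.1 = t.erase q.2 := by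
        rw [← hqt]
        exact (Finset.erase_insert hq2).symm
      have e2 : q'.1 = t.erase q'.2 := by
        rw [← hq't]
        exact (Finset.erase_insert hq'2).symm
      have h1' : q.1 = q'.1 := by rw [e1, e2, h2']
      exact Sigma.ext h1' (h2' ▸ HEq.rfl)
  calc ∑ s ∈ GS n D k, (Ext D s).card = P.card := hcardP.symm
    _ ≤ (k + 1) * (P.image φ).card := Finset.card_le_mul_card_image P (k+1) hfiber
    _ ≤ (k + 1) * (GS n D (k + 1)).card :=
        Nat.mul_le_mul_left _ (Finset.card_le_card himg)

lemma empty_mem_GS (D : ℕ) : (∅ : Finset (Sym2 (Fin n))) ∈ GS n D 0 := by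
  refine Finset.mem_filter.2 ⟨Finset.mem_univ _, rfl, fun e he => absurd he (Finset.notMem_empty e),
    ?_, fun v => by simp [degIn]⟩
  rintro ⟨a, b, c, d, hab, -, -, -, -, -, h12, -⟩
  rw [SimpleGraph.fromEdgeSet_adj] at h12
  simp at h12

lemma gs_count (D : ℕ) (m : ℕ) :
    (Nat.card {G : SimpleGraph (Fin n) // G.edgeSet.ncard = m ∧ ¬ G.HasC4} : ℝ) ≥
      ((GS n D m).card : ℝ) := by
  have hinj : ∃ f : {s // s ∈ GS n D m} → {G : SimpleGraph (Fin n) // G.edgeSet.ncard = m ∧ ¬ G.HasC4},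
      Function.Injective f := by
    have hprop : ∀ s : {s // s ∈ GS n D m},
        (SimpleGraph.fromEdgeSet (↑s.1 : Set (Sym2 (Fin n)))).edgeSet = (↑s.1 : Set (Sym2 (Fin n))) := by
      intro s
      obtain ⟨-, -, hdiag, -, -⟩ : True ∧ s.1.card = m ∧ _ := by
        have h := Finset.mem_filter.1 s.2
        exact ⟨trivial, h.2⟩
      rw [SimpleGraph.edgeSet_fromEdgeSet]
      ext e
      simp only [Set.mem_diff, Set.mem_setOf_eq, Finset.mem_coe, and_iff_left_iff_imp]
      exact fun he => hdiag e he
    refine ⟨fun s => ⟨SimpleGraph.fromEdgeSet (↑s.1 : Set (Sym2 (Fin n))), ?_, ?_⟩, ?_⟩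
    · rw [hprop s, Set.ncard_coe_finset]
      exact (Finset.mem_filter.1 s.2).2.1
    · exact (Finset.mem_filter.1 s.2).2.2.2.1
    · intro s t hst
      have h1 := hprop s
      have h2 := hprop t
      have : (↑s.1 : Set (Sym2 (Fin n))) = ↑t.1 := by
        rw [← h1, ← h2]
        exact congrArg SimpleGraph.edgeSet (congrArg Subtype.val hst)
      exact Subtype.ext (Finset.coe_injective this)
  obtain ⟨f, hf⟩ := hinj
  have := Nat.card_le_card_of_injective f hf
  rw [Nat.card_eq_finsetCard] at this
  exact_mod_cast this

end

end C4Lower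

open C4Lower

/-- For every `γ > 0` there is `δ > 0` such that for all sufficiently large `n` and all
`m ≤ δ n^{4/3}`, the number of `C₄`-free graphs on `{1,…,n}` with `m` edges is at least
`e^{-γ m} · C(C(n,2), m)`. -/
theorem count_C4_free_lower (γ : ℝ) (hγ : 0 < γ) :
    ∃ δ : ℝ, 0 < δ ∧ ∃ N : ℕ, ∀ n : ℕ, N ≤ n → ∀ m : ℕ,
      (m : ℝ) ≤ δ * (n : ℝ) ^ (4 / 3 : ℝ) →
      (Nat.card {G : SimpleGraph (Fin n) // G.edgeSet.ncard = m ∧ ¬ G.HasC4} : ℝ) ≥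
        Real.exp (-γ * m) * ((n.choose 2).choose m : ℝ) := by
  set c : ℝ := 1 - Real.exp (-γ) with hc
  have hexp1 : Real.exp (-γ) < 1 := by
    rw [Real.exp_lt_one_iff]; linarith
  have hexp0 : 0 < Real.exp (-γ) := Real.exp_pos _
  have hc0 : 0 < c := by simp only [hc]; linarith
  have hc1 : c < 1 := by simp only [hc]; linarith
  refine ⟨min (1/8) (c/88), by positivity, 2, ?_⟩
  intro n hn m hm
  -- setup
  set δ : ℝ := min (1/8) (c/88) with hδdef
  have hδ8 : δ ≤ 1/8 := min_le_left _ _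
  have hδc : 88 * δ ≤ c := by
    have := min_le_right (1/8 : ℝ) (c/88)
    linarith
  have hδ0 : 0 < δ := by positivity
  have hn2 : (2:ℝ) ≤ n := by exact_mod_cast hn
  have hn1 : (1:ℝ) ≤ n := by linarith
  set x : ℝ := (n : ℝ) ^ ((1:ℝ)/3) with hxdef
  have hx1 : 1 ≤ x := Real.one_le_rpow hn1 (by norm_num)
  have hx0 : 0 < x := by linarith
  have hx3 : x ^ 3 = (n : ℝ) := by
    rw [hxdef, ← Real.rpow_natCast ((n:ℝ) ^ ((1:ℝ)/3)) 3, ← Real.rpow_mul (by linarith)]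
    norm_num
  have hx4 : (n : ℝ) ^ ((4:ℝ)/3) = x ^ 4 := by
    rw [hxdef, ← Real.rpow_natCast ((n:ℝ) ^ ((1:ℝ)/3)) 4, ← Real.rpow_mul (by linarith)]
    norm_num
  set D : ℕ := ⌈x⌉₊ with hDdef
  have hD0 : 0 < D := Nat.ceil_pos.2 hx0
  have hDlo : x ≤ (D : ℝ) := Nat.le_ceil x
  have hDhi : (D : ℝ) ≤ 2 * x := by
    have := Nat.ceil_lt_add_one (le_of_lt hx0)
    linarith
  set M : ℕ := n.choose 2 with hMdef
  have hMlo : x ^ 6 / 4 ≤ (M : ℝ) := by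
    have hM : (M : ℝ) = (n:ℝ) * ((n:ℝ) - 1) / 2 := Nat.cast_choose_two (K := ℝ) n
    rw [hM, ← hx3]
    nlinarith [hx1]
  have hm' : (m : ℝ) ≤ δ * x ^ 4 := by rwa [hx4] at hm
  have hx46 : x ^ 4 ≤ x ^ 6 := pow_le_pow_right₀ hx1 (by norm_num)
  have hmn : (m : ℝ) ≤ δ * x ^ 6 :=
    le_trans hm' (mul_le_mul_of_nonneg_left hx46 hδ0.le)
  -- the key per-step numeric bound
  have hLbound : ∀ k : ℕ, (k : ℝ) ≤ (m : ℝ) →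
      Real.exp (-γ) * ((M : ℝ) - k) ≤ (M : ℝ) - k - 2 * k * (D:ℝ) ^ 2 - (2 * k / D) * n := by
    intro k hk
    have hk0 : (0:ℝ) ≤ k := Nat.cast_nonneg k
    have hdiv : (2 * (k:ℝ) / D) ≤ 2 * (m:ℝ) / x :=
      div_le_div₀ (by linarith) (by linarith) hx0 hDlo
    have hdivn : (2 * (k:ℝ) / D) * n ≤ 2 * (m:ℝ) * x ^ 2 := by
      have hn0 : (0:ℝ) ≤ n := by linarith
      calc (2 * (k:ℝ) / D) * n ≤ (2 * (m:ℝ) / x) * n :=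
            mul_le_mul_of_nonneg_right hdiv hn0
        _ = 2 * (m:ℝ) * x ^ 2 := by
            rw [← hx3]; field_simp
    have hD2 : (D:ℝ) ^ 2 ≤ 4 * x ^ 2 := by nlinarith [hDhi, hDlo, hx0]
    have hDsq : 2 * (k:ℝ) * (D:ℝ) ^ 2 ≤ 8 * (m:ℝ) * x ^ 2 := by
      nlinarith [hk, hk0, hD2, sq_nonneg x, hx0, mul_le_mul_of_nonneg_left hD2 hk0]
    have hMk : (M : ℝ) - k ≥ x ^ 6 / 8 := by
      nlinarith [hmn, hδ8, hx1]
    have hbadtot : (k:ℝ) + 2 * k * (D:ℝ)^2 + (2 * k / D) * n ≤ 11 * δ * x ^ 6 := by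
      nlinarith [hm', hmn, hx1, hk, hdivn, hDsq]
    have hgoal : (k:ℝ) + 2 * k * (D:ℝ)^2 + (2 * k / D) * n ≤ c * ((M:ℝ) - k) := by
      calc (k:ℝ) + 2 * k * (D:ℝ)^2 + (2 * k / D) * n ≤ 11 * δ * x ^ 6 := hbadtot
        _ ≤ (c / 8) * x ^ 6 := by nlinarith [hδc, hx1, pow_pos hx0 6]
        _ ≤ c * ((M:ℝ) - k) := by nlinarith [hMk, hc0]
    have : Real.exp (-γ) = 1 - c := by rw [hc]; ring
    rw [this]
    nlinarith [hgoal]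
  -- the induction
  have hkM : ∀ k : ℕ, (k : ℝ) ≤ (m:ℝ) → k ≤ M := by
    intro k hk
    have : (k : ℝ) ≤ (M : ℝ) := by
      have := hMlo
      have := hmn
      have hδ8' := hδ8
      nlinarith [hx1]
    exact_mod_cast this
  have key : ∀ k : ℕ, k ≤ m →
      Real.exp (-γ * k) * ((M.choose k : ℕ) : ℝ) ≤ ((GS n D k).card : ℝ) := by
    intro k
    induction k with
    | zero =>
      intro _
      simp only [Nat.cast_zero, mul_zero, neg_zero, Real.exp_zero, Nat.choose_zero_right,
        Nat.cast_one, one_mul]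
      have : 0 < (GS n D 0).card := Finset.card_pos.2 ⟨∅, empty_mem_GS D⟩
      exact_mod_cast this
    | succ k ih =>
      intro hk1
      have hkm : k ≤ m := Nat.le_of_succ_le hk1
      have hkmr : (k : ℝ) ≤ (m : ℝ) := by exact_mod_cast hkm
      have ihk := ih hkm
      -- recursion in ℝ
      have hrec : (∑ s ∈ GS n D k, ((Ext D s).card : ℝ)) ≤ ((k:ℝ) + 1) * ((GS n D (k+1)).card : ℝ) := by
        have := gs_succ_card (n := n) D k
        calc (∑ s ∈ GS n D k, ((Ext D s).card : ℝ))
            = ((∑ s ∈ GS n D k, (Ext D s).card : ℕ) : ℝ) := by push_cast; ring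
          _ ≤ (((k + 1) * (GS n D (k+1)).card : ℕ) : ℝ) := by exact_mod_cast this
          _ = ((k:ℝ) + 1) * ((GS n D (k+1)).card : ℝ) := by push_cast; ring
      set L : ℝ := (M : ℝ) - k - 2 * k * (D:ℝ) ^ 2 - (2 * k / D) * n with hL
      have hsum : ((GS n D k).card : ℝ) * L ≤ ∑ s ∈ GS n D k, ((Ext D s).card : ℝ) := by
        calc ((GS n D k).card : ℝ) * L = (GS n D k).card • L := by rw [nsmul_eq_mul]
          _ ≤ ∑ s ∈ GS n D k, ((Ext D s).card : ℝ) :=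
            Finset.card_nsmul_le_sum _ _ _ (fun s hs => ext_card_ge D k hD0 s hs)
      have hLge : Real.exp (-γ) * ((M : ℝ) - k) ≤ L := hLbound k hkmr
      have hMk0 : (0:ℝ) ≤ (M:ℝ) - k := by
        have := hkM k hkmr
        have : (k:ℝ) ≤ (M:ℝ) := by exact_mod_cast this
        linarith
      have hmid : Real.exp (-γ * k) * ((M.choose k : ℕ) : ℝ) * (Real.exp (-γ) * ((M:ℝ) - k))
          ≤ ((GS n D k).card : ℝ) * L := by
        apply mul_le_mul ihk hLge (by positivity) (by positivity)
      -- choose identity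
      have hchoose : ((M:ℝ) - k) * ((M.choose k : ℕ) : ℝ) = ((k:ℝ)+1) * ((M.choose (k+1) : ℕ) : ℝ) := by
        have hid := Nat.choose_succ_right_eq M k
        have hkM' := hkM k hkmr
        have : ((M.choose (k+1) * (k+1) : ℕ) : ℝ) = ((M.choose k * (M - k) : ℕ) : ℝ) := by
          exact_mod_cast congrArg (Nat.cast : ℕ → ℝ) hid
        push_cast [Nat.cast_sub hkM'] at this
        linarith [this]
      have hexpid : Real.exp (-γ * (k+1)) = Real.exp (-γ * k) * Real.exp (-γ) := by
        rw [← Real.exp_add]; ring_nf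
      have hfinal : Real.exp (-γ * ((k:ℕ)+1 : ℕ)) * ((M.choose (k+1) : ℕ) : ℝ) * ((k:ℝ)+1)
          ≤ ((GS n D (k+1)).card : ℝ) * ((k:ℝ)+1) := by
        have e1 : Real.exp (-γ * ((k:ℕ)+1 : ℕ)) * ((M.choose (k+1) : ℕ) : ℝ) * ((k:ℝ)+1)
            = Real.exp (-γ * k) * ((M.choose k : ℕ) : ℝ) * (Real.exp (-γ) * ((M:ℝ) - k)) := by
          push_cast
          rw [hexpid]
          linear_combination (-(Real.exp (-γ * (k:ℝ)) * Real.exp (-γ))) * hchoose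
        rw [e1]
        calc Real.exp (-γ * k) * ((M.choose k : ℕ) : ℝ) * (Real.exp (-γ) * ((M:ℝ) - k))
            ≤ ((GS n D k).card : ℝ) * L := hmid
          _ ≤ ∑ s ∈ GS n D k, ((Ext D s).card : ℝ) := hsum
          _ ≤ ((k:ℝ) + 1) * ((GS n D (k+1)).card : ℝ) := hrec
          _ = ((GS n D (k+1)).card : ℝ) * ((k:ℝ)+1) := by ring
      have hk1pos : (0:ℝ) < (k:ℝ) + 1 := by positivity
      exact le_of_mul_le_mul_right hfinal hk1pos
  have hmain := key m le_rfl
  calc Real.exp (-γ * m) * ((M.choose m : ℕ) : ℝ) ≤ ((GS n D m).card : ℝ) := hmain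
    _ ≤ (Nat.card {G : SimpleGraph (Fin n) // G.edgeSet.ncard = m ∧ ¬ G.HasC4} : ℝ) := gs_count D m
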